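/- Let j_1 < j_2 < … < j_d be positive even integers and let S ⊆ ℝ^n be a nonempty set with the property that for all x ∈ S and all y ∈ ℝ^n, if p_{j_l}(y) = p_{j_l}(x) for every l ∈ {1,…,d}, then y ∈ S (this holds in particular when S is a semi-algebraic set described by symmetric {j_1,…,j_d}-sparse polynomials). Then S contains a point y all of whose coordinates are nonnegative and which has at most d distinct nonzero coordinates, i.e., S ∩ A_d^+ ≠ ∅. -/

import Mathlib

private lemma rolle_finset (g : ℝ → ℝ) (hg : Differentiable ℝ g) (V : Finset ℝ)
    (hroot : ∀ v ∈ V, g v = 0) :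
    ∃ W : Finset ℝ, V.card ≤ W.card + 1 ∧
      ∀ w ∈ W, deriv g w = 0 ∧ ∃ a ∈ V, ∃ b ∈ V, a < w ∧ w < b := by
  induction V using Finset.strongInduction with
  | _ V IH =>
    by_cases h1 : V.card ≤ 1
    · exact ⟨∅, by simpa using h1, by simp⟩
    · push_neg at h1
      have hVne : V.Nonempty := Finset.card_pos.mp (by omega)
      have hMV : V.max' hVne ∈ V := V.max'_mem hVne
      set M := V.max' hVne with hM
      set V₂ := V.erase M with hV₂
      have hV₂card : V₂.card = V.card - 1 := Finset.card_erase_of_mem hMV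
      have hV₂ne : V₂.Nonempty := Finset.card_pos.mp (by omega)
      set M₂ := V₂.max' hV₂ne with hM₂
      have hM₂V : M₂ ∈ V₂ := V₂.max'_mem hV₂ne
      have hM₂lt : M₂ < M :=
        lt_of_le_of_ne (V.le_max' M₂ (Finset.mem_of_mem_erase hM₂V))
          (Finset.ne_of_mem_erase hM₂V)
      obtain ⟨W₂, hWc, hWp⟩ := IH V₂ (Finset.erase_ssubset hMV)
        (fun v hv => hroot v (Finset.mem_of_mem_erase hv))
      obtain ⟨u, huI, hu0⟩ := exists_deriv_eq_zero hM₂lt hg.continuous.continuousOn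
        (by rw [hroot M₂ (Finset.mem_of_mem_erase hM₂V), hroot M hMV])
      have huW₂ : u ∉ W₂ := by
        intro huW
        obtain ⟨-, a, ha, b, hb, -, hwb⟩ := hWp u huW
        have hbM₂ : b ≤ M₂ := V₂.le_max' b hb
        exact absurd huI.1 (not_lt.mpr (le_of_lt (lt_of_lt_of_le hwb hbM₂)))
      refine ⟨insert u W₂, ?_, ?_⟩
      · rw [Finset.card_insert_of_notMem huW₂]; omega
      · intro w hw
        rcases Finset.mem_insert.mp hw with rfl | hw₂
        · exact ⟨hu0, M₂, Finset.mem_of_mem_erase hM₂V, M, hMV, huI.1, huI.2⟩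
        · obtain ⟨hd0, a, ha, b, hb, hab⟩ := hWp w hw₂
          exact ⟨hd0, a, Finset.mem_of_mem_erase ha, b, Finset.mem_of_mem_erase hb, hab⟩

private lemma few_roots : ∀ (N : ℕ) (s : Finset ℕ), s.card ≤ N → ∀ (c : ℕ → ℝ),
    (∃ e ∈ s, c e ≠ 0) → ∀ (V : Finset ℝ), (∀ v ∈ V, 0 < v) →
    (∀ v ∈ V, ∑ e ∈ s, c e * v ^ e = 0) → V.card < s.card := by
  intro N
  induction N with
  | zero =>
    rintro s hs c ⟨e, he, -⟩ V _ _
    exact absurd (Finset.card_pos.mpr ⟨e, he⟩) (by omega)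
  | succ N IH =>
    intro s hs c hc V hVpos hVroot
    obtain ⟨e₀, he₀, hce₀⟩ := hc
    have hsne : s.Nonempty := ⟨e₀, he₀⟩
    set μ := s.min' hsne with hμ
    have hμs : μ ∈ s := s.min'_mem hsne
    rcases V.eq_empty_or_nonempty with rfl | hV
    · simpa using Finset.card_pos.mpr hsne
    by_cases hB : ∃ e₁ ∈ s, e₁ ≠ μ ∧ c e₁ ≠ 0
    · obtain ⟨e₁, he₁, he₁μ, hce₁⟩ := hB
      have hμle : ∀ e ∈ s, μ ≤ e := fun e he => s.min'_le e he
      set g : ℝ → ℝ := fun t => ∑ e ∈ s, c e * t ^ (e - μ) with hgdef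
      have hgd : ∀ t : ℝ, HasDerivAt g (∑ e ∈ s, c e * (((e - μ : ℕ) : ℝ) * t ^ (e - μ - 1))) t :=
        fun t => HasDerivAt.fun_sum (fun e _ => (hasDerivAt_pow (e - μ) t).const_mul (c e))
      have hgdiff : Differentiable ℝ g := fun t => (hgd t).differentiableAt
      have hgroot : ∀ v ∈ V, g v = 0 := by
        intro v hv
        have hvpos := hVpos v hv
        have key : (∑ e ∈ s, c e * v ^ e) = v ^ μ * g v := by
          rw [hgdef, Finset.mul_sum]
          refine Finset.sum_congr rfl fun e he => ?_
          have hpe : v ^ e = v ^ μ * v ^ (e - μ) := by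
            rw [← pow_add, Nat.add_sub_cancel' (hμle e he)]
          rw [hpe]; ring
        have h0 := hVroot v hv
        rw [key] at h0
        rcases mul_eq_zero.mp h0 with h | h
        · exact absurd h (pow_ne_zero μ (ne_of_gt hvpos))
        · exact h
      obtain ⟨W, hWcard, hWp⟩ := rolle_finset g hgdiff V hgroot
      set s' := (s.erase μ).image (fun e => e - (μ + 1)) with hs'
      have hmem : ∀ e ∈ s.erase μ, μ + 1 ≤ e := by
        intro e he
        have := hμle e (Finset.mem_of_mem_erase he)
        have := Finset.ne_of_mem_erase he
        omega
      have hinj : Set.InjOn (fun e => e - (μ + 1)) (s.erase μ) := by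
        intro a ha b hb hab
        simp only at hab
        have := hmem a ha; have := hmem b hb
        omega
      have hs'card : s'.card = s.card - 1 := by
        rw [hs', Finset.card_image_of_injOn hinj, Finset.card_erase_of_mem hμs]
      set c' : ℕ → ℝ := fun e => ((e : ℝ) + 1) * c (e + μ + 1) with hc'
      have hWroot : ∀ w ∈ W, ∑ e ∈ s', c' e * w ^ e = 0 := by
        intro w hw
        have hdw := (hWp w hw).1
        rw [(hgd w).deriv] at hdw
        rw [hs', Finset.sum_image hinj]
        rw [← Finset.add_sum_erase s _ hμs] at hdw
        simp only [Nat.sub_self, Nat.cast_zero, zero_mul, mul_zero, zero_add] at hdw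
        rw [← hdw]
        refine Finset.sum_congr rfl fun e he => ?_
        have h1 := hmem e he
        simp only [hc']
        have h2 : e - (μ + 1) + μ + 1 = e := by omega
        have h3 : ((e - (μ + 1) : ℕ) : ℝ) + 1 = ((e - μ : ℕ) : ℝ) := by
          push_cast [Nat.cast_sub h1, Nat.cast_sub (by omega : μ ≤ e)]; ring
        have h4 : e - (μ + 1) = e - μ - 1 := by omega
        rw [h2, h3, h4]; ring
      have hWpos : ∀ w ∈ W, 0 < w := by
        intro w hw
        obtain ⟨-, a, ha, -, -, haw, -⟩ := hWp w hw
        exact lt_trans (hVpos a ha) haw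
      have he₁' : e₁ - (μ + 1) ∈ s' := Finset.mem_image_of_mem _ (Finset.mem_erase.mpr ⟨he₁μ, he₁⟩)
      have hc'ne : c' (e₁ - (μ + 1)) ≠ 0 := by
        simp only [hc']
        have h5 : e₁ - (μ + 1) + μ + 1 = e₁ := by have := hμle e₁ he₁; omega
        rw [h5]
        exact mul_ne_zero (by positivity) hce₁
      have hlt := IH s' (by omega) c' ⟨e₁ - (μ + 1), he₁', hc'ne⟩ W hWpos hWroot
      omega
    · push_neg at hB
      have hcμ : c μ ≠ 0 := by
        rcases eq_or_ne e₀ μ with rfl | hne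
        · exact hce₀
        · exact absurd (hB e₀ he₀ hne) hce₀
      obtain ⟨v, hv⟩ := hV
      have h0 := hVroot v hv
      rw [Finset.sum_eq_single μ (fun e he hne => by rw [hB e he hne, zero_mul]) (fun h => absurd hμs h)] at h0
      exact absurd h0 (mul_ne_zero hcμ (pow_ne_zero μ (ne_of_gt (hVpos v hv))))

/-- If `S ⊆ ℝ^n` is nonempty and closed under the equivalence of sharing the values of
the power sums `p_{j_1},…,p_{j_d}` for even positive exponents `j_1 < … < j_d`, then `S`
contains a nonnegative point with at most `d` distinct nonzero coordinates. -/
theorem even_sparse_set_meets_Adplus (n d : ℕ) (j : Fin d → ℕ)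
    (hmono : StrictMono j) (hpos : ∀ l, 0 < j l) (heven : ∀ l, Even (j l))
    (S : Set (Fin n → ℝ)) (hS : S.Nonempty)
    (hclosed : ∀ x ∈ S, ∀ y : Fin n → ℝ,
      (∀ l : Fin d, ∑ i, y i ^ j l = ∑ i, x i ^ j l) → y ∈ S) :
    ∃ y ∈ S, (∀ i, 0 ≤ y i) ∧ (Set.range y ∩ Set.Ioi (0 : ℝ)).ncard ≤ d := by
  obtain ⟨x, hx⟩ := hS
  rcases Nat.eq_zero_or_pos d with rfl | hd
  · refine ⟨fun _ => 0, hclosed x hx _ (fun l => l.elim0), fun i => le_refl 0, ?_⟩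
    have hempty : Set.range (fun _ : Fin n => (0:ℝ)) ∩ Set.Ioi 0 = ∅ := by
      apply Set.eq_empty_of_forall_notMem
      rintro t ⟨⟨i, rfl⟩, ht⟩
      simp at ht
    rw [hempty]; simp
  -- setup
  set jm := j ⟨d - 1, by omega⟩ with hjm
  set m := jm + 2 with hm
  have hmeven : Even m := (heven _).add even_two
  have hjle : ∀ l, j l ≤ jm := fun l => hmono.monotone (by
    show (l : ℕ) ≤ d - 1
    have := l.isLt; omega)
  have hjlt : ∀ l, j l < m := fun l => lt_of_le_of_lt (hjle l) (by omega)
  set g : Fin d → (Fin n → ℝ) → ℝ := fun l w => ∑ i, w i ^ j l with hgdef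
  set φ : (Fin n → ℝ) → ℝ := fun w => ∑ i, w i ^ m with hφdef
  set c : Fin d → ℝ := fun l => g l x with hcdef
  set T : Set (Fin n → ℝ) := {w | (∀ i, 0 ≤ w i) ∧ ∀ l, g l w = c l} with hTdef
  have habs : ∀ (k : ℕ), Even k → ∀ w : Fin n → ℝ, (∑ i, |w i| ^ k) = ∑ i, w i ^ k :=
    fun k hk w => Finset.sum_congr rfl (fun i _ => hk.pow_abs _)
  have hxa : (fun i => |x i|) ∈ T := ⟨fun i => abs_nonneg _, fun l => habs _ (heven l) x⟩
  -- compactness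
  have hgc : ∀ l, Continuous (g l) :=
    fun l => continuous_finset_sum _ (fun i _ => (continuous_apply i).pow _)
  have hφc : Continuous φ := continuous_finset_sum _ (fun i _ => (continuous_apply i).pow _)
  have hTclosed : IsClosed T := by
    have hTeq : T = (⋂ i, {w : Fin n → ℝ | 0 ≤ w i}) ∩ ⋂ l, {w | g l w = c l} := by
      ext w; simp [hTdef, Set.mem_iInter]
    rw [hTeq]
    exact (isClosed_iInter fun i => isClosed_le continuous_const (continuous_apply i)).inter
      (isClosed_iInter fun l => isClosed_eq (hgc l) continuous_const)
  set R := max 1 (c ⟨0, hd⟩) with hR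
  have hR0 : (0:ℝ) ≤ R := le_trans zero_le_one (le_max_left _ _)
  have hTsub : T ⊆ Metric.closedBall 0 R := by
    rintro w ⟨hw0, hwg⟩
    rw [mem_closedBall_zero_iff]
    refine (pi_norm_le_iff_of_nonneg hR0).mpr (fun i => ?_)
    rw [Real.norm_eq_abs, abs_of_nonneg (hw0 i)]
    have hb : w i ^ j ⟨0, hd⟩ ≤ c ⟨0, hd⟩ := by
      rw [← hwg ⟨0, hd⟩]
      exact Finset.single_le_sum (fun i' _ => pow_nonneg (hw0 i') _) (Finset.mem_univ i)
    rcases le_total (w i) 1 with h | h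
    · exact le_trans h (le_max_left _ _)
    · exact le_trans (le_trans (le_self_pow₀ h (hpos ⟨0, hd⟩).ne') hb) (le_max_right _ _)
  have hTcomp : IsCompact T :=
    IsCompact.of_isClosed_subset (isCompact_closedBall 0 R) hTclosed hTsub
  obtain ⟨y, hyT, hymin⟩ := hTcomp.exists_isMinOn ⟨_, hxa⟩ hφc.continuousOn
  -- y is a global min on the full variety
  have hUmin : IsMinOn φ {w | ∀ l, g l w = g l y} y := by
    rw [isMinOn_iff]
    intro w hw
    have hwa : (fun i => |w i|) ∈ T := by
      refine ⟨fun i => abs_nonneg _, fun l => ?_⟩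
      rw [show g (l) (fun i => |w i|) = ∑ i, |w i| ^ j l from rfl, habs _ (heven l) w]
      rw [show (∑ i, w i ^ j l) = g l w from rfl, hw l, hyT.2 l]
    calc φ y ≤ φ (fun i => |w i|) := isMinOn_iff.mp hymin _ hwa
      _ = φ w := habs m hmeven w
  have hextr : IsLocalExtrOn φ {w | ∀ l, g l w = g l y} y :=
    Or.inl (hUmin.filter_mono (Filter.le_principal_iff.mpr self_mem_nhdsWithin))
  -- derivatives
  have hpowd : ∀ (k : ℕ) (i : Fin n),
      HasStrictFDerivAt (fun w : Fin n → ℝ => w i ^ k)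
        (((k : ℝ) * y i ^ (k - 1)) • (ContinuousLinearMap.proj i : (Fin n → ℝ) →L[ℝ] ℝ)) y :=
    fun k i => (hasStrictDerivAt_pow k (y i)).comp_hasStrictFDerivAt y
      ((ContinuousLinearMap.proj i : (Fin n → ℝ) →L[ℝ] ℝ).hasStrictFDerivAt)
  set g' : Fin d → (Fin n → ℝ) →L[ℝ] ℝ :=
    fun l => ∑ i, (((j l : ℝ)) * y i ^ (j l - 1)) • ContinuousLinearMap.proj i with hg'
  have hg'd : ∀ l, HasStrictFDerivAt (g l) (g' l) y :=
    fun l => HasStrictFDerivAt.fun_sum (fun i _ => hpowd (j l) i)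
  set φ' : (Fin n → ℝ) →L[ℝ] ℝ :=
    ∑ i, (((m : ℝ)) * y i ^ (m - 1)) • ContinuousLinearMap.proj i with hφ'
  have hφ'd : HasStrictFDerivAt φ φ' y := HasStrictFDerivAt.fun_sum (fun i _ => hpowd m i)
  obtain ⟨Λ, Λ₀, hne, hsum⟩ := hextr.exists_multipliers_of_hasStrictFDerivAt hg'd hφ'd
  -- evaluate at Pi.single i 1
  have hproj : ∀ (coef : Fin n → ℝ) (i : Fin n),
      (∑ i', coef i' • (ContinuousLinearMap.proj i' : (Fin n → ℝ) →L[ℝ] ℝ)) (Pi.single i 1)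
        = coef i := by
    intro coef i
    rw [ContinuousLinearMap.sum_apply]
    simp only [ContinuousLinearMap.smul_apply, ContinuousLinearMap.proj_apply, smul_eq_mul]
    rw [Finset.sum_eq_single i (fun b _ hb => by rw [Pi.single_eq_of_ne hb, mul_zero])
      (fun h => absurd (Finset.mem_univ i) h)]
    rw [Pi.single_eq_same, mul_one]
  have heval : ∀ i : Fin n,
      (∑ l, Λ l * ((j l : ℝ) * y i ^ (j l - 1))) + Λ₀ * ((m : ℝ) * y i ^ (m - 1)) = 0 := by
    intro i
    have h := DFunLike.congr_fun hsum (Pi.single i (1:ℝ))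
    simp only [ContinuousLinearMap.add_apply, ContinuousLinearMap.coe_sum', Finset.sum_apply,
      ContinuousLinearMap.smul_apply, smul_eq_mul, ContinuousLinearMap.zero_apply] at h
    rw [hφ', hproj] at h
    calc (∑ l, Λ l * ((j l : ℝ) * y i ^ (j l - 1))) + Λ₀ * ((m : ℝ) * y i ^ (m - 1))
        = (∑ l, Λ l * (g' l) (Pi.single i 1)) + Λ₀ * ((m : ℝ) * y i ^ (m - 1)) := by
          refine congrArg (· + _) (Finset.sum_congr rfl fun l _ => ?_)
          rw [hg', hproj]
      _ = 0 := h
  -- the polynomial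
  set E : Fin (d + 1) → ℕ := Fin.snoc (fun l => j l - 1) (m - 1) with hE
  set C : Fin (d + 1) → ℝ := Fin.snoc (fun l => Λ l * (j l : ℝ)) (Λ₀ * (m : ℝ)) with hC
  have hEcast : ∀ l : Fin d, E l.castSucc = j l - 1 := fun l => Fin.snoc_castSucc _ _ l
  have hElast : E (Fin.last d) = m - 1 := Fin.snoc_last _ _
  have hCcast : ∀ l : Fin d, C l.castSucc = Λ l * (j l : ℝ) := fun l => Fin.snoc_castSucc _ _ l
  have hClast : C (Fin.last d) = Λ₀ * (m : ℝ) := Fin.snoc_last _ _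
  have hEinj : Function.Injective E := by
    intro a b hab
    induction a using Fin.lastCases with
    | last =>
      induction b using Fin.lastCases with
      | last => rfl
      | cast lb =>
        rw [hElast, hEcast] at hab
        have := hjlt lb; have := hpos lb; omega
    | cast la =>
      induction b using Fin.lastCases with
      | last =>
        rw [hElast, hEcast] at hab
        have := hjlt la; have := hpos la; omega
      | cast lb =>
        rw [hEcast, hEcast] at hab
        have h1 := hpos la; have h2 := hpos lb
        have : j la = j lb := by omega
        rw [hmono.injective this]
  have hsumEC : ∀ t : ℝ, (∑ k, C k * t ^ E k)
      = (∑ l, Λ l * ((j l : ℝ) * t ^ (j l - 1))) + Λ₀ * ((m : ℝ) * t ^ (m - 1)) := by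
    intro t
    rw [Fin.sum_univ_castSucc]
    refine congrArg₂ (· + ·) (Finset.sum_congr rfl fun l _ => ?_) ?_
    · rw [hEcast, hCcast]; ring
    · rw [hElast, hClast]; ring
  -- the finset of distinct positive values
  have hfin : (Set.range y ∩ Set.Ioi (0:ℝ)).Finite := (Set.finite_range y).inter_of_left _
  set V := hfin.toFinset with hV
  set s : Finset ℕ := Finset.univ.image E with hs
  set c0 : ℕ → ℝ := fun e => ∑ k ∈ Finset.univ.filter (fun k => E k = e), C k with hc0
  have hc0E : ∀ k, c0 (E k) = C k := by
    intro k
    have hfilt : Finset.univ.filter (fun k' => E k' = E k) = {k} := by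
      ext b
      simp [Finset.mem_filter, hEinj.eq_iff]
    simp only [hc0, hfilt, Finset.sum_singleton]
  have hscard : s.card = d + 1 := by
    rw [hs, Finset.card_image_of_injective _ hEinj, Finset.card_univ, Fintype.card_fin]
  have hroots : ∀ v ∈ V, ∑ e ∈ s, c0 e * v ^ e = 0 := by
    intro v hv
    obtain ⟨⟨i, hi⟩, hv0⟩ := hfin.mem_toFinset.mp hv
    rw [hs, Finset.sum_image (fun a _ b _ h => hEinj h)]
    have : ∀ k, c0 (E k) * v ^ E k = C k * v ^ E k := fun k => by rw [hc0E]
    rw [Finset.sum_congr rfl (fun k _ => this k), hsumEC v, ← hi]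
    exact heval i
  have hVpos : ∀ v ∈ V, 0 < v := fun v hv => (hfin.mem_toFinset.mp hv).2
  have hcne : ∃ e ∈ s, c0 e ≠ 0 := by
    have hCk : ∃ k, C k ≠ 0 := by
      by_cases hΛ₀ : Λ₀ = 0
      · have hΛ : Λ ≠ 0 := by
          intro h; exact hne (by rw [h, hΛ₀]; rfl)
        obtain ⟨l, hl⟩ := Function.ne_iff.mp hΛ
        refine ⟨l.castSucc, ?_⟩
        rw [hCcast]
        exact mul_ne_zero hl (Nat.cast_ne_zero.mpr (hpos l).ne')
      · refine ⟨Fin.last d, ?_⟩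
        rw [hClast]
        exact mul_ne_zero hΛ₀ (by positivity)
    obtain ⟨k, hk⟩ := hCk
    exact ⟨E k, Finset.mem_image_of_mem E (Finset.mem_univ k), by rw [hc0E]; exact hk⟩
  have hcard := few_roots (d + 1) s (by omega) c0 hcne V hVpos hroots
  refine ⟨y, ?_, hyT.1, ?_⟩
  · exact hclosed x hx y (fun l => hyT.2 l)
  · rw [Set.ncard_eq_toFinset_card _ hfin]
    show V.card ≤ d
    omega
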